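/- Let σ be a finite sequence of signs in {+, −} with k minus signs and k+s plus signs, where k ≥ 0 and k+s ≥ 0 and σ is nonempty. Then the minimum n for which there exists a binary sequence x of length n with x_n = 1 and signature σ(x) = σ equals 3k + s + 1, and this minimum does not depend on the order of the signs in σ. -/

import Mathlib

/-- The signature of a binary sequence `x` of length `n`: scan consecutive pairs in order,
recording `true` (a plus sign) for each pair `(1,1)` and `false` (a minus sign) for each pair
`(1,0)`, ignoring pairs whose first entry is `0`. -/
def signSeq (n : ℕ) (x : Fin n → Bool) : List Bool :=
  (List.ofFn fun i : Fin (n - 1) =>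
    if x ⟨i.val, by have := i.isLt; omega⟩ = true then
      some (x ⟨i.val + 1, by have := i.isLt; omega⟩)
    else none).reduceOption


def sig : List Bool → List Bool
  | a :: b :: l => (if a then [b] else []) ++ sig (b :: l)
  | _ => []

lemma sig_cons_cons (a b : Bool) (l : List Bool) :
    sig (a :: b :: l) = (if a then [b] else []) ++ sig (b :: l) := rfl

lemma signSeq_eq_sig : ∀ (n : ℕ) (x : Fin n → Bool), signSeq n x = sig (List.ofFn x)
  | 0, x => by simp [signSeq, sig]
  | 1, x => by simp [signSeq, sig, List.ofFn_succ]
  | (n+2), x => by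
    have ih := signSeq_eq_sig (n+1) (fun i => x i.succ)
    simp only [signSeq, Nat.add_sub_cancel] at ih ⊢
    rw [List.ofFn_succ (f := fun i : Fin (n+1) => x i.succ)] at ih
    rw [List.ofFn_succ, List.ofFn_succ (f := x), List.ofFn_succ (f := fun i : Fin (n+1) => x i.succ)]
    simp only [Fin.coe_cast, Fin.succ_mk, Fin.val_succ, Fin.val_zero, Fin.mk_zero, Fin.mk_one,
      Fin.succ_zero_eq_one, zero_add] at ih ⊢
    rw [sig_cons_cons, ← ih]
    by_cases hx0 : x 0 = true <;> by_cases hx1 : x 1 = true <;>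
      simp [hx0, hx1, List.reduceOption_cons_of_some, List.reduceOption_cons_of_none]

def build : List Bool → List Bool
  | [] => [true]
  | true :: σ => true :: build σ
  | false :: σ => true :: false :: build σ

lemma build_head : ∀ σ : List Bool, ∃ l, build σ = true :: l
  | [] => ⟨[], rfl⟩
  | true :: σ => ⟨build σ, rfl⟩
  | false :: σ => ⟨false :: build σ, rfl⟩

lemma build_getLast : ∀ σ : List Bool, (build σ).getLast? = some true
  | [] => rfl
  | true :: σ => by
    obtain ⟨l, hl⟩ := build_head σ
    rw [show build (true :: σ) = true :: build σ from rfl, hl, List.getLast?_cons_cons, ← hl,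
      build_getLast σ]
  | false :: σ => by
    obtain ⟨l, hl⟩ := build_head σ
    rw [show build (false :: σ) = true :: false :: build σ from rfl, List.getLast?_cons_cons, hl,
      List.getLast?_cons_cons, ← hl, build_getLast σ]

lemma sig_build : ∀ σ : List Bool, sig (build σ) = σ
  | [] => rfl
  | true :: σ => by
    obtain ⟨l, hl⟩ := build_head σ
    rw [show build (true :: σ) = true :: build σ from rfl, hl, sig_cons_cons, ← hl, sig_build σ]
    simp
  | false :: σ => by
    obtain ⟨l, hl⟩ := build_head σ
    rw [show build (false :: σ) = true :: false :: build σ from rfl, sig_cons_cons, hl,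
      sig_cons_cons, ← hl, sig_build σ]
    simp

lemma build_length : ∀ σ : List Bool, (build σ).length = σ.length + σ.count false + 1
  | [] => rfl
  | true :: σ => by
    rw [show build (true :: σ) = true :: build σ from rfl]
    simp [build_length σ, List.count_cons]
    ring
  | false :: σ => by
    rw [show build (false :: σ) = true :: false :: build σ from rfl]
    simp [build_length σ, List.count_cons]
    ring

lemma lb : ∀ L : List Bool, L.getLast? = some true →
    (sig L).length + (sig L).count false + 1 + (if L.head? = some false then 1 else 0) ≤ L.length
  | [], h => by simp at h
  | [a], h => by
    simp [List.getLast?] at h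
    subst h
    simp [sig]
  | a :: b :: l, h => by
    rw [List.getLast?_cons_cons] at h
    have ih := lb (b :: l) h
    rw [sig_cons_cons]
    cases a <;> cases b <;> simp_all [List.count_cons] <;> omega

lemma bool_count (L : List Bool) : L.count true + L.count false = L.length := by
  induction L with
  | nil => simp
  | cons a l ih => cases a <;> simp [List.count_cons] <;> omega

/-- Lemma 3 (heady case): if `σ` is a nonempty signature with `k` minus signs and `k + s`
plus signs (`k ≥ 0`, `k + s ≥ 0`), then the minimum length `n` of a binary sequence ending
in 1 with signature `σ` equals `3k + s + 1`; moreover this minimum is the same for every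
rearrangement of the signs of `σ`. -/
theorem heady_min_length (σ : List Bool) (k : ℕ) (s : ℤ) (hne : σ ≠ [])
    (hminus : σ.count false = k) (hplus : (σ.count true : ℤ) = (k : ℤ) + s)
    (hks : 0 ≤ (k : ℤ) + s) :
    ∃ m : ℕ, (m : ℤ) = 3 * (k : ℤ) + s + 1 ∧
      ∀ σ' : List Bool, σ'.Perm σ →
        IsLeast {n : ℕ | ∃ x : Fin n → Bool,
          (∀ i : Fin n, (i : ℕ) = n - 1 → x i = true) ∧ signSeq n x = σ'} m := by
  refine ⟨(build σ).length, ?_, ?_⟩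
  · have h1 := build_length σ
    have h2 := bool_count σ
    push_cast [h1, ← h2, hminus, hplus] at *
    ring
  · intro σ' hperm
    have hlen : σ'.length = σ.length := hperm.length_eq
    have hcf : σ'.count false = σ.count false := hperm.count_eq false
    have hm : (build σ).length = (build σ').length := by
      rw [build_length, build_length, hlen, hcf]
    constructor
    · rw [Set.mem_setOf_eq, hm]
      refine ⟨fun i => (build σ').get i, ?_, ?_⟩
      · intro i hi
        have hlast := build_getLast σ'
        rw [List.getLast?_eq_getElem?] at hlast
        have hGE : (build σ')[(build σ').length - 1]? =
            some ((build σ').get i) := by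
          rw [List.getElem?_eq_getElem (by omega)]
          simp [List.get_eq_getElem, ← hi]
        rw [hGE] at hlast
        exact (Option.some_injective _ hlast.symm) ▸ rfl
      · rw [signSeq_eq_sig, List.ofFn_get, sig_build]
    · rintro n ⟨x, hxlast, hxsig⟩
      rw [signSeq_eq_sig] at hxsig
      rcases Nat.eq_zero_or_pos n with hn | hn
      · subst hn
        have h0 : σ' = [] := by simpa [sig] using hxsig.symm
        have : σ.length = 0 := by rw [← hlen, h0]; rfl
        exact absurd (List.length_eq_zero_iff.mp this) hne
      · have hL : (List.ofFn x).getLast? = some true := by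
          rw [List.getLast?_eq_getElem?, List.length_ofFn,
            List.getElem?_eq_getElem (by simpa using by omega)]
          simp only [List.getElem_ofFn]
          rw [hxlast ⟨n - 1, by omega⟩ rfl]
        have hlb := lb (List.ofFn x) hL
        rw [hxsig] at hlb
        have hLn : (List.ofFn x).length = n := List.length_ofFn (f := x)
        rw [build_length, ← hlen, ← hcf]
        split_ifs at hlb <;> omega
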